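/- For multivariate isotropic Gaussians on ℝ^m with means v₁, v₂ and covariance σ²I_m, the hockey stick divergence D_α(N(v₁, σ²I_m)||N(v₂, σ²I_m)) depends only on ‖v₁ − v₂‖₂ and equals the one-dimensional divergence D_α(N(‖v₁−v₂‖₂, σ²)||N(0, σ²)). -/

import Mathlib

open MeasureTheory

/-- Density of the one-dimensional Gaussian distribution `N(μ, σ²)`. -/
noncomputable def gaussPDF (μ σ z : ℝ) : ℝ :=
  (1 / (σ * Real.sqrt (2 * Real.pi))) * Real.exp (-((z - μ) ^ 2) / (2 * σ ^ 2))

/-- Density of the isotropic Gaussian `N(v, σ²I_m)` on `ℝ^m`. -/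
noncomputable def isoGaussPDF (m : ℕ) (v : Fin m → ℝ) (σ : ℝ) (z : Fin m → ℝ) : ℝ :=
  ∏ i, gaussPDF (v i) σ (z i)

open Real in
lemma gaussPDF_eq (μ σ : ℝ) (hσ : 0 < σ) (z : ℝ) :
    gaussPDF μ σ z = ProbabilityTheory.gaussianPDFReal μ (⟨σ^2, sq_nonneg σ⟩ : NNReal) z := by
  unfold gaussPDF ProbabilityTheory.gaussianPDFReal
  show _ = (Real.sqrt (2 * Real.pi * σ ^ 2))⁻¹ * Real.exp (-(z - μ) ^ 2 / (2 * σ ^ 2))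
  have : Real.sqrt (2 * Real.pi * σ ^ 2) = σ * Real.sqrt (2 * Real.pi) := by
    rw [mul_comm (2 * Real.pi), Real.sqrt_mul (sq_nonneg σ), Real.sqrt_sq hσ.le]
  rw [this, one_div]

lemma gaussPDF_pos (μ σ : ℝ) (hσ : 0 < σ) (z : ℝ) : 0 < gaussPDF μ σ z := by
  apply mul_pos
  · positivity
  · exact Real.exp_pos _

lemma integral_gaussPDF (μ σ : ℝ) (hσ : 0 < σ) : ∫ z, gaussPDF μ σ z = 1 := by
  have h : (⟨σ^2, sq_nonneg σ⟩ : NNReal) ≠ 0 := by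
    intro h; apply absurd (congrArg (fun x : NNReal => (x:ℝ)) h)
    show ¬ (σ ^ 2 = ((0 : NNReal) : ℝ)); simp [NNReal.coe_mk]; positivity
  rw [show (fun z => gaussPDF μ σ z) = fun z => ProbabilityTheory.gaussianPDFReal μ ⟨σ^2, sq_nonneg σ⟩ z from funext (gaussPDF_eq μ σ hσ)]
  exact ProbabilityTheory.integral_gaussianPDFReal_eq_one μ h

lemma isoGaussPDF_closed (m : ℕ) (v : Fin m → ℝ) (σ : ℝ) (z : Fin m → ℝ) :
    isoGaussPDF m v σ z =
      (1 / (σ * Real.sqrt (2 * Real.pi))) ^ m *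
        Real.exp (-(∑ i, (z i - v i) ^ 2) / (2 * σ ^ 2)) := by
  unfold isoGaussPDF gaussPDF
  rw [Finset.prod_mul_distrib, Finset.prod_const, Finset.card_univ, Fintype.card_fin,
    ← Real.exp_sum]
  congr 1
  rw [← Finset.sum_div, ← Finset.sum_neg_distrib]

lemma prod_gaussPDF_congr (m : ℕ) (a b : Fin m → ℝ) (σ : ℝ) (x y : Fin m → ℝ)
    (h : ∑ i, (x i - a i) ^ 2 = ∑ i, (y i - b i) ^ 2) :
    ∏ i, gaussPDF (a i) σ (x i) = ∏ i, gaussPDF (b i) σ (y i) := by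
  have h1 := isoGaussPDF_closed m a σ x
  have h2 := isoGaussPDF_closed m b σ y
  unfold isoGaussPDF at h1 h2
  rw [h1, h2, h]

open RealInnerProductSpace in
lemma exists_isometry (m : ℕ) (i0 : Fin m) (w : EuclideanSpace ℝ (Fin m)) :
    ∃ T : EuclideanSpace ℝ (Fin m) ≃ₗᵢ[ℝ] EuclideanSpace ℝ (Fin m),
      ∀ z, ⟪T z, w⟫ = ‖w‖ * z i0 := by
  by_cases hw : w = 0
  · exact ⟨LinearIsometryEquiv.refl ℝ _, fun z => by simp [hw]⟩
  · set u : EuclideanSpace ℝ (Fin m) := ‖w‖⁻¹ • w with hu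
    have hnw : (0:ℝ) < ‖w‖ := norm_pos_iff.mpr hw
    have hun : ‖u‖ = 1 := by
      rw [hu, norm_smul, norm_inv, norm_norm, inv_mul_cancel₀ hnw.ne']
    set e0 : EuclideanSpace ℝ (Fin m) := EuclideanSpace.single i0 (1:ℝ) with he0def
    have he0 : ‖e0‖ = 1 := by simp [he0def]
    refine ⟨Submodule.reflection (ℝ ∙ (e0 - u))ᗮ, fun z => ?_⟩
    have hT : Submodule.reflection (ℝ ∙ (e0 - u))ᗮ e0 = u := Submodule.reflection_sub (by rw [he0, hun])
    have hwu : w = ‖w‖ • u := by rw [hu, smul_smul, mul_inv_cancel₀ hnw.ne', one_smul]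
    calc ⟪Submodule.reflection (ℝ ∙ (e0 - u))ᗮ z, w⟫
        = ‖w‖ * ⟪Submodule.reflection (ℝ ∙ (e0 - u))ᗮ z, Submodule.reflection (ℝ ∙ (e0 - u))ᗮ e0⟫ := by
          rw [hT]
          conv_lhs => rw [hwu]
          rw [real_inner_smul_right]
      _ = ‖w‖ * ⟪z, e0⟫ := by rw [LinearIsometryEquiv.inner_map_map]
      _ = ‖w‖ * z i0 := by
          rw [he0def, EuclideanSpace.inner_single_right]; simp

open RealInnerProductSpace in
lemma euclid_inner_eq (m : ℕ) (x y : EuclideanSpace ℝ (Fin m)) :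
    ⟪x, y⟫ = ∑ i, x i * y i := by
  simp [PiLp.inner_apply, RCLike.inner_apply, conj_trivial]
  exact Finset.sum_congr rfl fun i _ => mul_comm _ _

lemma euclid_sum_sq (m : ℕ) (x : EuclideanSpace ℝ (Fin m)) :
    ∑ i, (x i) ^ 2 = ‖x‖ ^ 2 := by
  rw [EuclideanSpace.norm_eq, Real.sq_sqrt (by positivity)]
  simp [Real.norm_eq_abs, sq_abs]

lemma sum_sq_expand (m : ℕ) (y t : Fin m → ℝ) :
    ∑ i, (y i - t i) ^ 2
      = ∑ i, (y i) ^ 2 - 2 * (∑ i, y i * t i) + ∑ i, (t i) ^ 2 := by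
  rw [Finset.mul_sum, ← Finset.sum_sub_distrib, ← Finset.sum_add_distrib]
  exact Finset.sum_congr rfl fun i _ => by ring

/-- For multivariate isotropic Gaussians on `ℝ^m` with means `v₁, v₂` and
covariance `σ²I_m`, the hockey stick divergence depends only on `‖v₁ − v₂‖₂` and
equals the one-dimensional divergence `D_α(N(‖v₁−v₂‖₂, σ²)‖N(0, σ²))`. -/
theorem hockey_stick_iso_gaussian (m : ℕ) (v₁ v₂ : Fin m → ℝ) (σ α : ℝ)
    (hσ : 0 < σ) (hα : 0 ≤ α) :
    ∫ z : Fin m → ℝ, max 0 (isoGaussPDF m v₁ σ z - α * isoGaussPDF m v₂ σ z) =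
      ∫ z : ℝ, max 0 (gaussPDF (Real.sqrt (∑ i, (v₁ i - v₂ i) ^ 2)) σ z -
        α * gaussPDF 0 σ z) := by

  rcases Nat.eq_zero_or_pos m with hm | hm
  · subst hm
    have h0 : (volume : Measure (Fin 0 → ℝ)) = Measure.dirac 0 := Measure.volume_pi_eq_dirac 0
    simp only [isoGaussPDF, Finset.univ_eq_empty, Finset.prod_empty, Finset.sum_empty,
      Real.sqrt_zero, mul_one]
    rw [h0, integral_dirac]
    have key : ∀ z : ℝ, max 0 (gaussPDF 0 σ z - α * gaussPDF 0 σ z)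
        = max 0 (1 - α) * gaussPDF 0 σ z := by
      intro z
      rw [max_mul_of_nonneg _ _ (gaussPDF_pos 0 σ hσ z).le, zero_mul, sub_mul, one_mul]
    simp only [key]
    rw [integral_const_mul, integral_gaussPDF 0 σ hσ, mul_one]
  · set d := Real.sqrt (∑ i, (v₁ i - v₂ i) ^ 2) with hd
    set i0 : Fin m := ⟨0, hm⟩ with hi0
    set w : EuclideanSpace ℝ (Fin m) :=
      (WithLp.equiv 2 (Fin m → ℝ)).symm (fun i => v₁ i - v₂ i) with hwdef
    have hwcoord : ∀ i, w i = v₁ i - v₂ i := fun i => rfl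
    have hnorm_w : ‖w‖ = d := by
      rw [EuclideanSpace.norm_eq, hd]
      congr 1
      exact Finset.sum_congr rfl fun i _ => by rw [hwcoord, Real.norm_eq_abs, sq_abs]
    obtain ⟨T, hT⟩ := exists_isometry m i0 w
    have hd0 : (0:ℝ) ≤ d := Real.sqrt_nonneg _
    set G : ℝ → ℝ := fun t => max 0 (gaussPDF d σ t - α * gaussPDF 0 σ t) with hG
    set h : Fin m → ℝ → ℝ := fun i => if i = i0 then G else gaussPDF 0 σ with hh
    set Φ : (Fin m → ℝ) → ℝ :=
      fun z => max 0 (isoGaussPDF m v₁ σ z - α * isoGaussPDF m v₂ σ z) with hΦ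
    set eqv := (MeasurableEquiv.toLp 2 (Fin m → ℝ)).symm with heqv
    -- pointwise identity
    have hpoint : ∀ y : EuclideanSpace ℝ (Fin m),
        Φ (eqv (T y) + v₂) = ∏ i, h i (y i) := by
      intro y
      have hx : ∀ i, (eqv (T y) + v₂) i = (T y) i + v₂ i := fun i => rfl
      set tt : Fin m → ℝ := fun i => if i = i0 then d else 0 with htt
      have hsum1 : ∑ i, ((eqv (T y) + v₂) i - v₁ i) ^ 2 = ∑ i, (y i - tt i) ^ 2 := by
        have l1 : ∀ i, (eqv (T y) + v₂) i - v₁ i = (T y) i - w i := by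
          intro i; rw [hx, hwcoord]; ring
        calc ∑ i, ((eqv (T y) + v₂) i - v₁ i) ^ 2
            = ∑ i, ((T y) i - w i) ^ 2 := Finset.sum_congr rfl fun i _ => by rw [l1]
          _ = ∑ i, ((T y) i) ^ 2 - 2 * (∑ i, (T y) i * w i) + ∑ i, (w i) ^ 2 :=
              sum_sq_expand m _ _
          _ = ∑ i, (y i) ^ 2 - 2 * (d * y i0) + d ^ 2 := by
              have e1 : ∑ i, ((T y) i) ^ 2 = ∑ i, (y i) ^ 2 := by
                rw [euclid_sum_sq, euclid_sum_sq, T.norm_map]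
              have e2 : ∑ i, (T y) i * w i = d * y i0 := by
                rw [← euclid_inner_eq, hT, hnorm_w]
              have e3 : ∑ i, (w i) ^ 2 = d ^ 2 := by rw [euclid_sum_sq, hnorm_w]
              rw [e1, e2, e3]
          _ = ∑ i, (y i) ^ 2 - 2 * (∑ i, y i * tt i) + ∑ i, (tt i) ^ 2 := by
              have e4 : ∑ i, y i * tt i = d * y i0 := by
                simp [htt, mul_ite, mul_zero, Finset.sum_ite_eq', mul_comm]
              have e5 : ∑ i, (tt i) ^ 2 = d ^ 2 := by
                simp [htt, apply_ite (· ^ 2), Finset.sum_ite_eq']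
              rw [e4, e5]
          _ = ∑ i, (y i - tt i) ^ 2 := (sum_sq_expand m _ _).symm
      have hsum2 : ∑ i, ((eqv (T y) + v₂) i - v₂ i) ^ 2 = ∑ i, (y i - 0) ^ 2 := by
        calc ∑ i, ((eqv (T y) + v₂) i - v₂ i) ^ 2
            = ∑ i, ((T y) i) ^ 2 := Finset.sum_congr rfl fun i _ => by rw [hx]; ring_nf
          _ = ∑ i, (y i) ^ 2 := by rw [euclid_sum_sq, T.norm_map, ← euclid_sum_sq m y]
          _ = ∑ i, (y i - 0) ^ 2 := by simp
      have hA : isoGaussPDF m v₁ σ (eqv (T y) + v₂) = ∏ i, gaussPDF (tt i) σ (y i) :=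
        prod_gaussPDF_congr m v₁ tt σ _ y hsum1
      have hB : isoGaussPDF m v₂ σ (eqv (T y) + v₂) = ∏ i, gaussPDF 0 σ (y i) :=
        prod_gaussPDF_congr m v₂ (fun _ => 0) σ _ y hsum2
      set P : ℝ := ∏ i ∈ Finset.univ.erase i0, gaussPDF 0 σ (y i) with hP
      have hPnn : 0 ≤ P :=
        Finset.prod_nonneg fun i _ => (gaussPDF_pos 0 σ hσ (y i)).le
      have hA' : (∏ i, gaussPDF (tt i) σ (y i)) = gaussPDF d σ (y i0) * P := by
        rw [← Finset.mul_prod_erase _ _ (Finset.mem_univ i0)]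
        have h1 : gaussPDF (tt i0) σ (y i0) = gaussPDF d σ (y i0) := by simp [htt]
        have h2 : ∏ i ∈ Finset.univ.erase i0, gaussPDF (tt i) σ (y i) = P := by
          rw [hP]
          refine Finset.prod_congr rfl fun i hi => ?_
          have hz : tt i = 0 := by simp [htt, Finset.ne_of_mem_erase hi]
          rw [hz]
        rw [h1, h2]
      have hB' : (∏ i, gaussPDF 0 σ (y i)) = gaussPDF 0 σ (y i0) * P := by
        rw [← Finset.mul_prod_erase _ _ (Finset.mem_univ i0)]
      have hh' : (∏ i, h i (y i)) = G (y i0) * P := by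
        rw [← Finset.mul_prod_erase _ _ (Finset.mem_univ i0)]
        have h1 : h i0 (y i0) = G (y i0) := by simp [hh]
        have h2 : ∏ i ∈ Finset.univ.erase i0, h i (y i) = P := by
          rw [hP]
          refine Finset.prod_congr rfl fun i hi => ?_
          have hz : h i = gaussPDF 0 σ := by simp [hh, Finset.ne_of_mem_erase hi]
          rw [hz]
        rw [h1, h2]
      rw [hΦ]
      simp only [hA, hB, hA', hB', hh']
      rw [hG]
      rw [max_mul_of_nonneg _ _ hPnn, zero_mul, sub_mul]
      ring_nf
    -- integral chain
    calc ∫ z : Fin m → ℝ, Φ z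
        = ∫ z : Fin m → ℝ, Φ (z + v₂) :=
          (MeasureTheory.integral_add_right_eq_self Φ v₂).symm
      _ = ∫ y : EuclideanSpace ℝ (Fin m), Φ (eqv y + v₂) :=
          ((EuclideanSpace.volume_preserving_symm_measurableEquiv_toLp (Fin m)).integral_comp'
            (fun z => Φ (z + v₂))).symm
      _ = ∫ y : EuclideanSpace ℝ (Fin m), Φ (eqv (T y) + v₂) :=
          (T.measurePreserving.integral_comp T.toHomeomorph.measurableEmbedding
            (fun y => Φ (eqv y + v₂))).symm
      _ = ∫ y : EuclideanSpace ℝ (Fin m), ∏ i, h i (y i) :=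
          MeasureTheory.integral_congr_ae (Filter.Eventually.of_forall hpoint)
      _ = ∫ z : Fin m → ℝ, ∏ i, h i (z i) :=
          (EuclideanSpace.volume_preserving_symm_measurableEquiv_toLp (Fin m)).integral_comp'
            (fun z => ∏ i, h i (z i))
      _ = ∏ i, ∫ t : ℝ, h i t := MeasureTheory.integral_fintype_prod_eq_prod h
      _ = ∫ t : ℝ, G t := by
          rw [Finset.prod_eq_single_of_mem i0 (Finset.mem_univ i0)]
          · rw [hh]; simp
          · intro i _ hi
            rw [hh]
            simp only [if_neg hi]
            exact integral_gaussPDF 0 σ hσ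
      _ = ∫ z : ℝ, max 0 (gaussPDF d σ z - α * gaussPDF 0 σ z) := rfl
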